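/- Let n ≥ 2 and let Z be a standard Gaussian random variable. Then for all q_1,…,q_n ∈ ℕ: E[∏_{r=1}^n H_{q_r}(Z)] = (∏_{r=1}^n q_r!) · Σ_{κ = {k_{ij}} ∈ A_{q_1,…,q_n}} ∏_{1 ≤ i < j ≤ n} 1/k_{ij}!. -/

import Mathlib

open MeasureTheory ProbabilityTheory Polynomial

noncomputable section

/-- Evaluation of the probabilists' Hermite polynomial `H_q`. -/
def Hval (q : ℕ) (z : ℝ) : ℝ := Polynomial.aeval z (Polynomial.hermite q)

/-- The index set `A_{q₁,…,qₙ}` of the diagram formula: symmetric families of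
nonnegative integers `k i j` with zero diagonal and row sums `q i`. -/
def memA {n : ℕ} (q : Fin n → ℕ) (k : Fin n → Fin n → ℕ) : Prop :=
  (∀ i, k i i = 0) ∧ (∀ i j, k i j = k j i) ∧ (∀ i, (∑ j, k i j) = q i)

open Real Filter
open scoped NNReal ENNReal

namespace DiagramAux

/-- the standard gaussian density -/
def gpdf (x : ℝ) : ℝ := gaussianPDFReal 0 1 x

lemma gpdf_eq (x : ℝ) : gpdf x = (Real.sqrt (2 * π))⁻¹ * Real.exp (-x^2/2) := by
  simp [gpdf, gaussianPDFReal]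

lemma gpdf_nonneg (x : ℝ) : 0 ≤ gpdf x := gaussianPDFReal_nonneg 0 1 x

lemma integral_gauss_eq (g : ℝ → ℝ) :
    ∫ z, g z ∂(gaussianReal 0 1) = ∫ x, gpdf x * g x := by
  rw [gaussianReal_of_var_ne_zero 0 one_ne_zero]
  have h : (gaussianPDF 0 1) = fun x => ((Real.toNNReal (gpdf x) : ℝ≥0) : ℝ≥0∞) := rfl
  have hm : Measurable fun x => (gpdf x).toNNReal :=
    (measurable_gaussianPDFReal 0 1).real_toNNReal
  rw [h, integral_withDensity_eq_integral_smul hm g]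
  congr 1
  funext x
  rw [NNReal.smul_def, Real.coe_toNNReal _ (gpdf_nonneg x), smul_eq_mul]

lemma pow_gauss_bdd (n : ℕ) (x : ℝ) :
    ‖x ^ n * Real.exp (-x^2/4)‖ ≤ (n.factorial : ℝ) * Real.exp 1 := by
  have h1 : |x| ^ n ≤ (n.factorial : ℝ) * Real.exp |x| := by
    have := Real.pow_div_factorial_le_exp _ (abs_nonneg x) n
    have hf : (0:ℝ) < n.factorial := by positivity
    calc |x| ^ n = |x| ^ n / n.factorial * n.factorial := by field_simp
    _ ≤ Real.exp |x| * n.factorial := by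
        apply mul_le_mul_of_nonneg_right this hf.le
    _ = _ := by ring
  have h2 : Real.exp |x| * Real.exp (-x^2/4) ≤ Real.exp 1 := by
    rw [← Real.exp_add]
    apply Real.exp_le_exp.2
    nlinarith [sq_nonneg (|x| - 2), sq_abs x]
  calc ‖x ^ n * Real.exp (-x^2/4)‖ = |x|^n * Real.exp (-x^2/4) := by
        rw [norm_mul, norm_pow, Real.norm_eq_abs, Real.norm_eq_abs,
          abs_of_nonneg (Real.exp_pos _).le]
  _ ≤ ((n.factorial : ℝ) * Real.exp |x|) * Real.exp (-x^2/4) := by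
        apply mul_le_mul_of_nonneg_right h1 (Real.exp_pos _).le
  _ = (n.factorial : ℝ) * (Real.exp |x| * Real.exp (-x^2/4)) := by ring
  _ ≤ (n.factorial : ℝ) * Real.exp 1 := by
        apply mul_le_mul_of_nonneg_left h2 (by positivity)

lemma integrable_pow_gauss (n : ℕ) :
    Integrable (fun x : ℝ => x ^ n * Real.exp (-x^2/2)) := by
  have h : (fun x : ℝ => x ^ n * Real.exp (-x^2/2))
      = fun x : ℝ => (x ^ n * Real.exp (-x^2/4)) * Real.exp (-(1/4 : ℝ) * x^2) := by
    funext x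
    rw [mul_assoc, ← Real.exp_add]
    ring_nf
  rw [h]
  apply Integrable.bdd_mul (integrable_exp_neg_mul_sq (by norm_num : (0:ℝ) < 1/4))
  · apply Continuous.aestronglyMeasurable
    continuity
  · exact Filter.Eventually.of_forall (pow_gauss_bdd n)

lemma integrable_poly_gauss (P : Polynomial ℝ) :
    Integrable (fun x : ℝ => P.eval x * Real.exp (-x^2/2)) := by
  have h : (fun x : ℝ => P.eval x * Real.exp (-x^2/2))
      = fun x : ℝ => ∑ i ∈ Finset.range (P.natDegree + 1),
          P.coeff i * (x ^ i * Real.exp (-x^2/2)) := by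
    funext x
    rw [Polynomial.eval_eq_sum_range, Finset.sum_mul]
    apply Finset.sum_congr rfl
    intros; ring
  rw [h]
  apply integrable_finset_sum
  intro i _
  exact (integrable_pow_gauss i).const_mul _

lemma tendsto_pow_gauss_atTop (n : ℕ) :
    Tendsto (fun x : ℝ => x ^ n * Real.exp (-x^2/2)) atTop (nhds 0) := by
  have h := rpow_mul_exp_neg_mul_sq_isLittleO_exp_neg (by norm_num : (0:ℝ) < 1/2) (n : ℝ)
  have h2 : (fun x : ℝ => x ^ (n:ℝ) * Real.exp (-(1/2:ℝ) * x^2))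
      = fun x : ℝ => x ^ n * Real.exp (-x^2/2) := by
    funext x
    rw [Real.rpow_natCast]
    ring_nf
  rw [h2] at h
  have hg : Tendsto (fun x : ℝ => Real.exp (-(1/2 : ℝ) * x)) atTop (nhds 0) :=
    Real.tendsto_exp_atBot.comp
      ((tendsto_const_mul_atBot_of_neg (by norm_num : (-(1/2):ℝ) < 0)).2 tendsto_id)
  exact h.isBigO.trans_tendsto hg

lemma tendsto_poly_gauss_atTop (P : Polynomial ℝ) :
    Tendsto (fun x : ℝ => P.eval x * Real.exp (-x^2/2)) atTop (nhds 0) := by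
  have h : (fun x : ℝ => P.eval x * Real.exp (-x^2/2))
      = fun x : ℝ => ∑ i ∈ Finset.range (P.natDegree + 1),
          P.coeff i * (x ^ i * Real.exp (-x^2/2)) := by
    funext x
    rw [Polynomial.eval_eq_sum_range, Finset.sum_mul]
    apply Finset.sum_congr rfl
    intros; ring
  rw [h]
  have : (0:ℝ) = ∑ i ∈ Finset.range (P.natDegree + 1), (0:ℝ) := by simp
  rw [this]
  apply tendsto_finset_sum
  intro i _
  have := (tendsto_pow_gauss_atTop i).const_mul (P.coeff i)
  simpa using this

lemma tendsto_poly_gauss_atBot (P : Polynomial ℝ) :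
    Tendsto (fun x : ℝ => P.eval x * Real.exp (-x^2/2)) atBot (nhds 0) := by
  have h := (tendsto_poly_gauss_atTop (P.comp (-X))).comp tendsto_neg_atBot_atTop
  have h2 : ((fun x : ℝ => (P.comp (-X)).eval x * Real.exp (-x^2/2)) ∘ (fun x : ℝ => -x))
      = fun x : ℝ => P.eval x * Real.exp (-x^2/2) := by
    funext x
    simp [Function.comp, Polynomial.eval_comp, neg_sq]
  rwa [h2] at h

lemma hasDerivAt_poly_gauss (P : Polynomial ℝ) (x : ℝ) :
    HasDerivAt (fun x : ℝ => P.eval x * Real.exp (-x^2/2))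
      ((derivative P - X * P).eval x * Real.exp (-x^2/2)) x := by
  have h1 : HasDerivAt (fun x : ℝ => P.eval x) ((derivative P).eval x) x :=
    P.hasDerivAt x
  have hinner : HasDerivAt (fun x : ℝ => -x^2/2) (-x) x := by
    have := ((hasDerivAt_pow 2 x).neg).div_const 2
    refine this.congr_deriv ?_
    simp; ring
  have h2 : HasDerivAt (fun x : ℝ => Real.exp (-x^2/2)) (Real.exp (-x^2/2) * (-x)) x :=
    hinner.exp
  have := h1.mul h2
  refine this.congr_deriv ?_
  simp only [Polynomial.eval_sub, Polynomial.eval_mul, Polynomial.eval_X]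
  ring

/-- integration by parts for the (unnormalized) gaussian -/
lemma gauss_ibp (P : Polynomial ℝ) :
    ∫ x : ℝ, (X * P).eval x * Real.exp (-x^2/2)
      = ∫ x : ℝ, (derivative P).eval x * Real.exp (-x^2/2) := by
  have key : ∫ x : ℝ, (derivative P - X * P).eval x * Real.exp (-x^2/2) = 0 := by
    rw [integral_of_hasDerivAt_of_tendsto (hasDerivAt_poly_gauss P)
      (integrable_poly_gauss _) (tendsto_poly_gauss_atBot P) (tendsto_poly_gauss_atTop P)]
    simp
  have hsub : ∫ x : ℝ, (derivative P - X * P).eval x * Real.exp (-x^2/2)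
      = (∫ x : ℝ, (derivative P).eval x * Real.exp (-x^2/2))
        - ∫ x : ℝ, (X * P).eval x * Real.exp (-x^2/2) := by
    rw [← integral_sub (integrable_poly_gauss _) (integrable_poly_gauss _)]
    congr 1; funext x; simp; ring
  rw [hsub] at key
  linarith


/-- real Hermite polynomial -/
def Hr (q : ℕ) : Polynomial ℝ := (Polynomial.hermite q).map (Int.castRingHom ℝ)

lemma aeval_hermite_eq (q : ℕ) (z : ℝ) :
    (Polynomial.aeval z (Polynomial.hermite q) : ℝ) = (Hr q).eval z := by
  rw [Polynomial.aeval_def, Polynomial.eval₂_eq_eval_map]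
  rfl

lemma Hr_zero : Hr 0 = 1 := by simp [Hr, Polynomial.hermite_zero]

lemma Hr_succ (q : ℕ) : Hr (q + 1) = X * Hr q - derivative (Hr q) := by
  unfold Hr
  rw [Polynomial.hermite_succ, Polynomial.map_sub, Polynomial.map_mul, Polynomial.map_X,
    Polynomial.derivative_map]

lemma Hr_deriv (q : ℕ) : derivative (Hr q) = (q : ℝ) • Hr (q - 1) := by
  induction q using Nat.strong_induction_on with
  | _ q ih =>
    match q with
    | 0 => simp [Hr_zero]
    | 1 =>
      have : Hr 1 = X := by
        rw [Hr_succ 0, Hr_zero]; simp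
      rw [this]; simp [Hr_zero]
    | (m+2) =>
      have ih1 : derivative (Hr (m+1)) = ((m+1 : ℕ) : ℝ) • Hr m := by
        simpa using ih (m+1) (by omega)
      have ih0 : derivative (Hr m) = ((m : ℕ) : ℝ) • Hr (m - 1) := ih m (by omega)
      have hX : X * Hr m = Hr (m+1) + derivative (Hr m) := by
        rw [Hr_succ m]; ring
      rw [Hr_succ (m+1), derivative_sub, derivative_mul, derivative_X, one_mul, ih1,
        derivative_smul, ih0]
      have : X * ((((m:ℕ)+1 : ℕ) : ℝ) • Hr m) = (((m+1 : ℕ)) : ℝ) • (X * Hr m) := by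
        rw [mul_smul_comm]
      rw [this, hX, ih0]
      simp only [Nat.add_sub_cancel, smul_add, smul_smul, Polynomial.smul_eq_C_mul]
      push_cast
      simp only [Polynomial.C_add, Polynomial.C_mul, Polynomial.C_1, map_ofNat]
      ring

/-- Gaussian expectation of a polynomial -/
def J (P : Polynomial ℝ) : ℝ := ∫ x, gpdf x * P.eval x

lemma J_eq (P : Polynomial ℝ) :
    J P = (Real.sqrt (2 * π))⁻¹ * ∫ x, P.eval x * Real.exp (-x^2/2) := by
  unfold J
  rw [← integral_const_mul]
  congr 1
  funext x
  rw [gpdf_eq]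
  ring

lemma J_zero : J 0 = 0 := by unfold J; simp

lemma J_add (P Q : Polynomial ℝ) : J (P + Q) = J P + J Q := by
  rw [J_eq, J_eq, J_eq, ← mul_add, ← integral_add (integrable_poly_gauss P) (integrable_poly_gauss Q)]
  congr 1
  congr 1
  funext x
  simp
  ring

lemma J_smul (a : ℝ) (P : Polynomial ℝ) : J (a • P) = a * J P := by
  unfold J
  rw [← integral_const_mul]
  congr 1
  funext x
  simp
  ring

lemma J_sub (P Q : Polynomial ℝ) : J (P - Q) = J P - J Q := by
  have h := J_add (P - Q) Q
  simp only [sub_add_cancel] at h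
  linarith

lemma J_sum {ι : Type*} (s : Finset ι) (f : ι → Polynomial ℝ) :
    J (∑ i ∈ s, f i) = ∑ i ∈ s, J (f i) := by
  classical
  induction s using Finset.induction with
  | empty => simp [J_zero]
  | insert _ _ h ih => rw [Finset.sum_insert h, J_add, ih, Finset.sum_insert h]

lemma J_one : J 1 = 1 := by
  unfold J
  simp only [Polynomial.eval_one, mul_one]
  exact integral_gaussianPDFReal_eq_one 0 one_ne_zero

lemma J_ibp (P : Polynomial ℝ) : J (X * P) = J (derivative P) := by
  rw [J_eq, J_eq, gauss_ibp]

lemma derivative_finset_prod {ι : Type*} [DecidableEq ι] (s : Finset ι) (f : ι → Polynomial ℝ) :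
    derivative (∏ i ∈ s, f i) = ∑ i ∈ s, (∏ j ∈ s.erase i, f j) * derivative (f i) := by
  induction s using Finset.induction with
  | empty => simp
  | @insert a s ha ih =>
    rw [Finset.prod_insert ha, derivative_mul, ih, Finset.sum_insert ha,
      Finset.erase_insert ha, Finset.mul_sum]
    congr 1
    · ring
    · apply Finset.sum_congr rfl
      intro i hi
      have hia : i ≠ a := by rintro rfl; exact ha hi
      rw [Finset.erase_insert_of_ne hia.symm,
        Finset.prod_insert (fun h => ha (Finset.mem_of_mem_erase h))]
      ring

lemma J_prod_rec {n : ℕ} (q : Fin n → ℕ) (i : Fin n) (m : ℕ) (hqi : q i = m + 1) :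
    J (∏ r, Hr (q r)) =
      ∑ s ∈ Finset.univ.erase i, (q s : ℝ) *
        J (∏ r, Hr (Function.update (Function.update q i m) s (q s - 1) r)) := by
  classical
  set Q : Polynomial ℝ := ∏ r ∈ Finset.univ.erase i, Hr (q r) with hQ
  have h1 : (∏ r, Hr (q r)) = Hr (q i) * Q :=
    (Finset.mul_prod_erase Finset.univ _ (Finset.mem_univ i)).symm
  have h2 : J (∏ r, Hr (q r)) = J (Hr m * derivative Q) := by
    rw [h1, hqi, Hr_succ, sub_mul, J_sub, mul_assoc, J_ibp, derivative_mul, J_add]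
    ring
  rw [h2, hQ, derivative_finset_prod, Finset.mul_sum, J_sum]
  apply Finset.sum_congr rfl
  intro s hs
  have hsi : s ≠ i := (Finset.mem_erase.1 hs).1
  rw [Hr_deriv (q s)]
  have hsm : Hr m * ((∏ j ∈ (Finset.univ.erase i).erase s, Hr (q j)) * ((q s : ℝ) • Hr (q s - 1)))
      = (q s : ℝ) • (Hr m * ((∏ j ∈ (Finset.univ.erase i).erase s, Hr (q j)) * Hr (q s - 1))) := by
    rw [mul_smul_comm, mul_smul_comm]
  rw [hsm, J_smul]
  congr 2
  set q' := Function.update (Function.update q i m) s (q s - 1) with hq'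
  have hq'i : q' i = m := by
    rw [hq', Function.update_of_ne (Ne.symm hsi), Function.update_self]
  have hq's : q' s = q s - 1 := by rw [hq', Function.update_self]
  have hq'other : ∀ j, j ≠ i → j ≠ s → q' j = q j := by
    intro j hji hjs
    rw [hq', Function.update_of_ne hjs, Function.update_of_ne hji]
  have e1 : (∏ r, Hr (q' r)) = Hr (q' i) * ∏ r ∈ Finset.univ.erase i, Hr (q' r) :=
    (Finset.mul_prod_erase Finset.univ _ (Finset.mem_univ i)).symm
  have e2 : (∏ r ∈ Finset.univ.erase i, Hr (q' r))
      = Hr (q' s) * ∏ r ∈ (Finset.univ.erase i).erase s, Hr (q' r) :=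
    (Finset.mul_prod_erase _ _ hs).symm
  have e3 : (∏ r ∈ (Finset.univ.erase i).erase s, Hr (q' r))
      = ∏ r ∈ (Finset.univ.erase i).erase s, Hr (q r) := by
    apply Finset.prod_congr rfl
    intro j hj
    have h1' := Finset.mem_erase.1 hj
    have h2' := Finset.mem_erase.1 h1'.2
    rw [hq'other j h2'.1 h1'.1]
  rw [e1, e2, e3, hq'i, hq's]
  ring


variable {n : ℕ}

/-- weight of a diagram -/
def w (k : Fin n → Fin n → ℕ) : ℝ :=
  ∏ p ∈ Finset.univ.filter (fun p : Fin n × Fin n => p.1 < p.2),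
    (1 : ℝ) / (Nat.factorial (k p.1 p.2) : ℝ)

open scoped Classical in
/-- the finite set of diagrams -/
def bigA (q : Fin n → ℕ) : Finset (Fin n → Fin n → ℕ) :=
  (Fintype.piFinset fun _ : Fin n => Fintype.piFinset fun _ : Fin n =>
    Finset.range ((∑ r, q r) + 1)).filter (fun k => memA q k)

lemma mem_bigA {q : Fin n → ℕ} {k : Fin n → Fin n → ℕ} : k ∈ bigA q ↔ memA q k := by
  classical
  unfold bigA
  rw [Finset.mem_filter]
  constructor
  · exact fun h => h.2
  · intro h
    refine ⟨?_, h⟩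
    rw [Fintype.mem_piFinset]
    intro i
    rw [Fintype.mem_piFinset]
    intro j
    rw [Finset.mem_range]
    have h1 : k i j ≤ ∑ j, k i j :=
      Finset.single_le_sum (fun _ _ => Nat.zero_le _) (Finset.mem_univ j)
    have h2 : q i ≤ ∑ r, q r :=
      Finset.single_le_sum (fun _ _ => Nat.zero_le _) (Finset.mem_univ i)
    rw [h.2.2 i] at h1
    omega

lemma tsum_eq_bigA (q : Fin n → ℕ) (f : (Fin n → Fin n → ℕ) → ℝ) :
    ∑' κ : {k : Fin n → Fin n → ℕ // memA q k}, f κ.1 = ∑ k ∈ bigA q, f k := by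
  classical
  have h0 : (∑' κ : {k : Fin n → Fin n → ℕ // memA q k}, f κ.1)
      = ∑' x : ↑{k : Fin n → Fin n → ℕ | memA q k}, f x.1 := rfl
  rw [h0, tsum_subtype {k : Fin n → Fin n → ℕ | memA q k} f, tsum_eq_sum (s := bigA q)]
  · apply Finset.sum_congr rfl
    intro k hk
    exact Set.indicator_of_mem (show k ∈ {k : Fin n → Fin n → ℕ | memA q k} from mem_bigA.1 hk) f
  · intro k hk
    exact Set.indicator_of_notMem
      (show k ∉ {k : Fin n → Fin n → ℕ | memA q k} from fun h' => hk (mem_bigA.2 h')) f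

def inc (i s : Fin n) (k : Fin n → Fin n → ℕ) : Fin n → Fin n → ℕ :=
  fun a b => if (a = i ∧ b = s) ∨ (a = s ∧ b = i) then k a b + 1 else k a b

def dec (i s : Fin n) (k : Fin n → Fin n → ℕ) : Fin n → Fin n → ℕ :=
  fun a b => if (a = i ∧ b = s) ∨ (a = s ∧ b = i) then k a b - 1 else k a b

lemma inc_apply_of_ne (i s : Fin n) (k : Fin n → Fin n → ℕ) (a b : Fin n)
    (h : ¬ ((a = i ∧ b = s) ∨ (a = s ∧ b = i))) : inc i s k a b = k a b := by
  unfold inc; rw [if_neg h]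

lemma dec_apply_of_ne (i s : Fin n) (k : Fin n → Fin n → ℕ) (a b : Fin n)
    (h : ¬ ((a = i ∧ b = s) ∨ (a = s ∧ b = i))) : dec i s k a b = k a b := by
  unfold dec; rw [if_neg h]

lemma inc_apply_is (i s : Fin n) (hsi : s ≠ i) (k : Fin n → Fin n → ℕ) :
    inc i s k i s = k i s + 1 := by
  unfold inc; rw [if_pos (Or.inl ⟨rfl, rfl⟩)]

lemma dec_apply_is (i s : Fin n) (k : Fin n → Fin n → ℕ) :
    dec i s k i s = k i s - 1 := by
  unfold dec; rw [if_pos (Or.inl ⟨rfl, rfl⟩)]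

lemma inc_row_i (i s : Fin n) (hsi : s ≠ i) (k : Fin n → Fin n → ℕ) :
    inc i s k i = Function.update (k i) s (k i s + 1) := by
  funext b
  rcases eq_or_ne b s with rfl | hb
  · rw [Function.update_self, inc_apply_is i b hsi]
  · rw [Function.update_of_ne hb, inc_apply_of_ne]
    rintro (⟨-, h2⟩ | ⟨h1, -⟩)
    · exact hb h2
    · exact hsi h1.symm

lemma inc_row_s (i s : Fin n) (hsi : s ≠ i) (k : Fin n → Fin n → ℕ) :
    inc i s k s = Function.update (k s) i (k s i + 1) := by
  funext b
  rcases eq_or_ne b i with rfl | hb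
  · rw [Function.update_self]
    unfold inc; rw [if_pos (Or.inr ⟨rfl, rfl⟩)]
  · rw [Function.update_of_ne hb, inc_apply_of_ne]
    rintro (⟨h1, -⟩ | ⟨-, h2⟩)
    · exact hsi h1
    · exact hb h2

lemma inc_row_other (i s : Fin n) (k : Fin n → Fin n → ℕ) (a : Fin n)
    (hai : a ≠ i) (has : a ≠ s) : inc i s k a = k a := by
  funext b
  rw [inc_apply_of_ne]
  rintro (⟨h1, -⟩ | ⟨h1, -⟩)
  · exact hai h1
  · exact has h1

lemma dec_row_i (i s : Fin n) (hsi : s ≠ i) (k : Fin n → Fin n → ℕ) :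
    dec i s k i = Function.update (k i) s (k i s - 1) := by
  funext b
  rcases eq_or_ne b s with rfl | hb
  · rw [Function.update_self, dec_apply_is]
  · rw [Function.update_of_ne hb, dec_apply_of_ne]
    rintro (⟨-, h2⟩ | ⟨h1, -⟩)
    · exact hb h2
    · exact hsi h1.symm

lemma dec_row_s (i s : Fin n) (hsi : s ≠ i) (k : Fin n → Fin n → ℕ) :
    dec i s k s = Function.update (k s) i (k s i - 1) := by
  funext b
  rcases eq_or_ne b i with rfl | hb
  · rw [Function.update_self]
    unfold dec; rw [if_pos (Or.inr ⟨rfl, rfl⟩)]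
  · rw [Function.update_of_ne hb, dec_apply_of_ne]
    rintro (⟨h1, -⟩ | ⟨-, h2⟩)
    · exact hsi h1
    · exact hb h2

lemma dec_row_other (i s : Fin n) (k : Fin n → Fin n → ℕ) (a : Fin n)
    (hai : a ≠ i) (has : a ≠ s) : dec i s k a = k a := by
  funext b
  rw [dec_apply_of_ne]
  rintro (⟨h1, -⟩ | ⟨h1, -⟩)
  · exact hai h1
  · exact has h1

lemma sum_update_univ (f : Fin n → ℕ) (s : Fin n) (v : ℕ) :
    (∑ b, Function.update f s v b) + f s = v + ∑ b, f b := by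
  classical
  rw [Finset.sum_update_of_mem (Finset.mem_univ s), Finset.sdiff_singleton_eq_erase]
  have h := Finset.sum_erase_add Finset.univ f (Finset.mem_univ s)
  omega

lemma single_le_sum_univ (f : Fin n → ℕ) (s : Fin n) : f s ≤ ∑ b, f b :=
  Finset.single_le_sum (fun _ _ => Nat.zero_le _) (Finset.mem_univ s)

/-- memA for the incremented diagram -/
lemma memA_inc {q : Fin n → ℕ} (i s : Fin n) (hsi : s ≠ i) (m : ℕ) (hqi : q i = m + 1)
    (hqs : 1 ≤ q s) {k : Fin n → Fin n → ℕ}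
    (hk : memA (Function.update (Function.update q i m) s (q s - 1)) k) :
    memA q (inc i s k) := by
  obtain ⟨hdiag, hsymm, hrow⟩ := hk
  have hq'i : Function.update (Function.update q i m) s (q s - 1) i = m := by
    rw [Function.update_of_ne (Ne.symm hsi), Function.update_self]
  have hq's : Function.update (Function.update q i m) s (q s - 1) s = q s - 1 := by
    rw [Function.update_self]
  refine ⟨?_, ?_, ?_⟩
  · intro a
    rw [inc_apply_of_ne]
    · exact hdiag a
    · rintro (⟨rfl, rfl⟩ | ⟨rfl, rfl⟩) <;> exact hsi rfl
  · intro a b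
    unfold inc
    have hiff : ((a = i ∧ b = s) ∨ (a = s ∧ b = i)) ↔ ((b = i ∧ a = s) ∨ (b = s ∧ a = i)) := by
      tauto
    by_cases h : (a = i ∧ b = s) ∨ (a = s ∧ b = i)
    · rw [if_pos h, if_pos (hiff.1 h), hsymm a b]
    · rw [if_neg h, if_neg (fun h' => h (hiff.2 h')), hsymm a b]
  · intro a
    rcases eq_or_ne a i with rfl | hai
    · rw [inc_row_i a s hsi]
      have h := sum_update_univ (k a) s (k a s + 1)
      have h2 := single_le_sum_univ (k a) s
      have h3 := hrow a
      rw [hq'i] at h3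
      omega
    rcases eq_or_ne a s with rfl | has
    · rw [inc_row_s i a hsi]
      have h := sum_update_univ (k a) i (k a i + 1)
      have h2 := single_le_sum_univ (k a) i
      have h3 := hrow a
      rw [hq's] at h3
      omega
    · rw [inc_row_other i s k a hai has]
      have h3 := hrow a
      rw [Function.update_of_ne has, Function.update_of_ne hai] at h3
      exact h3

/-- memA for the decremented diagram -/
lemma memA_dec {q : Fin n → ℕ} (i s : Fin n) (hsi : s ≠ i) (m : ℕ) (hqi : q i = m + 1)
    {k : Fin n → Fin n → ℕ} (hk : memA q k) (hks : 1 ≤ k i s) :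
    memA (Function.update (Function.update q i m) s (q s - 1)) (dec i s k) := by
  obtain ⟨hdiag, hsymm, hrow⟩ := hk
  have hksi : 1 ≤ k s i := by rw [← hsymm i s]; exact hks
  have hq'i : Function.update (Function.update q i m) s (q s - 1) i = m := by
    rw [Function.update_of_ne (Ne.symm hsi), Function.update_self]
  have hq's : Function.update (Function.update q i m) s (q s - 1) s = q s - 1 := by
    rw [Function.update_self]
  refine ⟨?_, ?_, ?_⟩
  · intro a
    rw [dec_apply_of_ne]
    · exact hdiag a
    · rintro (⟨rfl, rfl⟩ | ⟨rfl, rfl⟩) <;> exact hsi rfl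
  · intro a b
    unfold dec
    have hiff : ((a = i ∧ b = s) ∨ (a = s ∧ b = i)) ↔ ((b = i ∧ a = s) ∨ (b = s ∧ a = i)) := by
      tauto
    by_cases h : (a = i ∧ b = s) ∨ (a = s ∧ b = i)
    · rw [if_pos h, if_pos (hiff.1 h), hsymm a b]
    · rw [if_neg h, if_neg (fun h' => h (hiff.2 h')), hsymm a b]
  · intro a
    rcases eq_or_ne a i with rfl | hai
    · rw [dec_row_i a s hsi, hq'i]
      have h := sum_update_univ (k a) s (k a s - 1)
      have h2 := single_le_sum_univ (k a) s
      have h3 := hrow a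
      omega
    rcases eq_or_ne a s with rfl | has
    · rw [dec_row_s i a hsi, hq's]
      have h := sum_update_univ (k a) i (k a i - 1)
      have h2 := single_le_sum_univ (k a) i
      have h3 := hrow a
      omega
    · rw [dec_row_other i s k a hai has]
      have h3 := hrow a
      rw [Function.update_of_ne has, Function.update_of_ne hai]
      exact h3

lemma dec_inc (i s : Fin n) (k : Fin n → Fin n → ℕ) : dec i s (inc i s k) = k := by
  funext a b
  unfold dec inc
  by_cases h : (a = i ∧ b = s) ∨ (a = s ∧ b = i)
  · rw [if_pos h, if_pos h]
    omega
  · simp only [if_neg h]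

lemma inc_dec (i s : Fin n) (k : Fin n → Fin n → ℕ) (hks : 1 ≤ k i s) (hksi : 1 ≤ k s i) :
    inc i s (dec i s k) = k := by
  funext a b
  unfold inc dec
  by_cases h : (a = i ∧ b = s) ∨ (a = s ∧ b = i)
  · rw [if_pos h, if_pos h]
    rcases h with ⟨rfl, rfl⟩ | ⟨rfl, rfl⟩ <;> omega
  · simp only [if_neg h]

/-- weight relation -/
lemma w_inc (i s : Fin n) (hsi : s ≠ i) (k : Fin n → Fin n → ℕ) (hsymm : k s i = k i s) :
    w k = ((k i s : ℕ) + 1 : ℝ) * w (inc i s k) := by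
  classical
  rcases lt_or_gt_of_ne (show i ≠ s from fun h => hsi h.symm) with hlt | hgt
  · -- ordered pair (i, s)
    have hmem : (i, s) ∈ Finset.univ.filter (fun p : Fin n × Fin n => p.1 < p.2) := by
      simp [hlt]
    unfold w
    rw [← Finset.mul_prod_erase _ _ hmem, ← Finset.mul_prod_erase _ _ hmem]
    have hprod : ∏ p ∈ (Finset.univ.filter (fun p : Fin n × Fin n => p.1 < p.2)).erase (i, s),
        (1:ℝ) / (Nat.factorial (inc i s k p.1 p.2)) =
        ∏ p ∈ (Finset.univ.filter (fun p : Fin n × Fin n => p.1 < p.2)).erase (i, s),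
        (1:ℝ) / (Nat.factorial (k p.1 p.2)) := by
      apply Finset.prod_congr rfl
      intro p hp
      have hne := (Finset.mem_erase.1 hp).1
      have hpf := Finset.mem_filter.1 (Finset.mem_erase.1 hp).2
      congr 3
      apply inc_apply_of_ne
      rintro (⟨h1, h2⟩ | ⟨h1, h2⟩)
      · exact hne (Prod.ext h1 h2)
      · rw [h1, h2] at hpf
        exact absurd hpf.2 (not_lt.2 hlt.le)
    rw [hprod, inc_apply_is i s hsi]
    rw [Nat.factorial_succ]
    push_cast
    have h1 : (Nat.factorial (k i s) : ℝ) ≠ 0 := Nat.cast_ne_zero.2 (Nat.factorial_ne_zero _)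
    field_simp
  · -- ordered pair (s, i)
    have hmem : (s, i) ∈ Finset.univ.filter (fun p : Fin n × Fin n => p.1 < p.2) := by
      simp [hgt]
    unfold w
    rw [← Finset.mul_prod_erase _ _ hmem, ← Finset.mul_prod_erase _ _ hmem]
    have hprod : ∏ p ∈ (Finset.univ.filter (fun p : Fin n × Fin n => p.1 < p.2)).erase (s, i),
        (1:ℝ) / (Nat.factorial (inc i s k p.1 p.2)) =
        ∏ p ∈ (Finset.univ.filter (fun p : Fin n × Fin n => p.1 < p.2)).erase (s, i),
        (1:ℝ) / (Nat.factorial (k p.1 p.2)) := by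
      apply Finset.prod_congr rfl
      intro p hp
      have hne := (Finset.mem_erase.1 hp).1
      have hpf := Finset.mem_filter.1 (Finset.mem_erase.1 hp).2
      congr 3
      apply inc_apply_of_ne
      rintro (⟨h1, h2⟩ | ⟨h1, h2⟩)
      · rw [h1, h2] at hpf
        exact absurd hpf.2 (not_lt.2 hgt.le)
      · exact hne (Prod.ext h1 h2)
    have hval : inc i s k s i = k s i + 1 := by
      unfold inc; rw [if_pos (Or.inr ⟨rfl, rfl⟩)]
    rw [hprod, hval, hsymm]
    rw [Nat.factorial_succ]
    push_cast
    have h1 : (Nat.factorial (k i s) : ℝ) ≠ 0 := Nat.cast_ne_zero.2 (Nat.factorial_ne_zero _)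
    field_simp

lemma sum_bigA_dec (q : Fin n → ℕ) (i s : Fin n) (hsi : s ≠ i) (hqs : 1 ≤ q s) (m : ℕ)
    (hqi : q i = m + 1) :
    ∑ k ∈ bigA (Function.update (Function.update q i m) s (q s - 1)), w k
      = ∑ k ∈ (bigA q).filter (fun k => 1 ≤ k i s), ((k i s : ℕ) : ℝ) * w k := by
  classical
  refine Finset.sum_bij' (i := fun k (_ : k ∈ bigA (Function.update (Function.update q i m) s
      (q s - 1))) => inc i s k)
    (j := fun k (_ : k ∈ (bigA q).filter (fun k => 1 ≤ k i s)) => dec i s k)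
    ?_ ?_ ?_ ?_ ?_
  · intro k hk
    rw [Finset.mem_filter]
    constructor
    · exact mem_bigA.2 (memA_inc i s hsi m hqi hqs (mem_bigA.1 hk))
    · show 1 ≤ inc i s k i s
      rw [inc_apply_is i s hsi]
      omega
  · intro k hk
    rw [Finset.mem_filter] at hk
    exact mem_bigA.2 (memA_dec i s hsi m hqi (mem_bigA.1 hk.1) hk.2)
  · intro k hk
    exact dec_inc i s k
  · intro k hk
    rw [Finset.mem_filter] at hk
    have hsymm := (mem_bigA.1 hk.1).2.1
    exact inc_dec i s k hk.2 (by rw [hsymm s i]; exact hk.2)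
  · intro k hk
    have hsymm := (mem_bigA.1 hk).2.1
    show w k = ((inc i s k i s : ℕ) : ℝ) * w (inc i s k)
    rw [inc_apply_is i s hsi, w_inc i s hsi k (hsymm s i)]
    push_cast
    ring

lemma G_rec (q : Fin n → ℕ) (i : Fin n) (m : ℕ) (hqi : q i = m + 1) :
    (∏ r, (Nat.factorial (q r) : ℝ)) * ∑ k ∈ bigA q, w k
      = ∑ s ∈ Finset.univ.erase i, (q s : ℝ) *
          ((∏ r, (Nat.factorial ((Function.update (Function.update q i m) s (q s - 1)) r) : ℝ)) *
            ∑ k ∈ bigA (Function.update (Function.update q i m) s (q s - 1)), w k) := by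
  classical
  -- each term equals (∏ q r !)/(m+1) * ∑_{k ∈ bigA q} (k i s) * w k
  have hterm : ∀ s ∈ Finset.univ.erase i, (q s : ℝ) *
      ((∏ r, (Nat.factorial ((Function.update (Function.update q i m) s (q s - 1)) r) : ℝ)) *
        ∑ k ∈ bigA (Function.update (Function.update q i m) s (q s - 1)), w k)
      = ((m : ℝ) + 1)⁻¹ * (∏ r, (Nat.factorial (q r) : ℝ)) *
          ∑ k ∈ bigA q, ((k i s : ℕ) : ℝ) * w k := by
    intro s hs
    have hsi : s ≠ i := (Finset.mem_erase.1 hs).1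
    rcases Nat.eq_zero_or_pos (q s) with hqs | hqs
    · -- both sides vanish
      have hzero : ∀ k ∈ bigA q, ((k i s : ℕ) : ℝ) * w k = 0 := by
        intro k hk
        obtain ⟨hdiag, hsymm, hrow⟩ := mem_bigA.1 hk
        have h1 : k s i ≤ ∑ j, k s j := single_le_sum_univ (k s) i
        rw [hrow s, hqs] at h1
        have h2 : k i s = 0 := by rw [hsymm i s]; omega
        rw [h2]
        simp
      rw [Finset.sum_congr rfl hzero]
      simp [hqs]
    · -- main case
      obtain ⟨t, ht⟩ : ∃ t, q s = t + 1 := ⟨q s - 1, by omega⟩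
      set q' := Function.update (Function.update q i m) s (q s - 1) with hq'
      have hq'i : q' i = m := by
        rw [hq', Function.update_of_ne (Ne.symm hsi), Function.update_self]
      have hq's : q' s = q s - 1 := by rw [hq', Function.update_self]
      have hq'other : ∀ j, j ≠ i → j ≠ s → q' j = q j := by
        intro j hji hjs
        rw [hq', Function.update_of_ne hjs, Function.update_of_ne hji]
      -- factorial identity
      have hfac : (q s : ℝ) * (∏ r, (Nat.factorial (q' r) : ℝ))
          = ((m : ℝ) + 1)⁻¹ * ∏ r, (Nat.factorial (q r) : ℝ) := by
        have e1 : (∏ r, (Nat.factorial (q' r) : ℝ)) = (Nat.factorial (q' i) : ℝ) *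
            ∏ r ∈ Finset.univ.erase i, (Nat.factorial (q' r) : ℝ) :=
          (Finset.mul_prod_erase Finset.univ _ (Finset.mem_univ i)).symm
        have e2 : (∏ r ∈ Finset.univ.erase i, (Nat.factorial (q' r) : ℝ))
            = (Nat.factorial (q' s) : ℝ) *
              ∏ r ∈ (Finset.univ.erase i).erase s, (Nat.factorial (q' r) : ℝ) :=
          (Finset.mul_prod_erase _ _ hs).symm
        have e3 : (∏ r ∈ (Finset.univ.erase i).erase s, (Nat.factorial (q' r) : ℝ))
            = ∏ r ∈ (Finset.univ.erase i).erase s, (Nat.factorial (q r) : ℝ) := by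
          apply Finset.prod_congr rfl
          intro j hj
          have h1' := Finset.mem_erase.1 hj
          have h2' := Finset.mem_erase.1 h1'.2
          rw [hq'other j h2'.1 h1'.1]
        have f1 : (∏ r, (Nat.factorial (q r) : ℝ)) = (Nat.factorial (q i) : ℝ) *
            ∏ r ∈ Finset.univ.erase i, (Nat.factorial (q r) : ℝ) :=
          (Finset.mul_prod_erase Finset.univ _ (Finset.mem_univ i)).symm
        have f2 : (∏ r ∈ Finset.univ.erase i, (Nat.factorial (q r) : ℝ))
            = (Nat.factorial (q s) : ℝ) *
              ∏ r ∈ (Finset.univ.erase i).erase s, (Nat.factorial (q r) : ℝ) :=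
          (Finset.mul_prod_erase _ _ hs).symm
        rw [e1, e2, e3, f1, f2, hq'i, hq's, hqi, ht]
        simp only [Nat.add_sub_cancel, Nat.factorial_succ t, Nat.factorial_succ m]
        push_cast
        have hm1 : ((m : ℝ) + 1) ≠ 0 := by positivity
        field_simp
      rw [sum_bigA_dec q i s hsi hqs m hqi]
      have hext : ∑ k ∈ (bigA q).filter (fun k => 1 ≤ k i s), ((k i s : ℕ) : ℝ) * w k
          = ∑ k ∈ bigA q, ((k i s : ℕ) : ℝ) * w k := by
        apply Finset.sum_filter_of_ne
        intro k hk hne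
        by_contra h
        push_neg at h
        have : k i s = 0 := by omega
        rw [this] at hne
        simp at hne
      rw [hext, ← mul_assoc, hfac]
  rw [Finset.sum_congr rfl hterm, ← Finset.mul_sum, Finset.sum_comm]
  have hin : ∀ k ∈ bigA q, ∑ s ∈ Finset.univ.erase i, ((k i s : ℕ) : ℝ) * w k
      = ((m : ℝ) + 1) * w k := by
    intro k hk
    obtain ⟨hdiag, hsymm, hrow⟩ := mem_bigA.1 hk
    rw [← Finset.sum_mul]
    congr 1
    have h1 : (∑ s ∈ Finset.univ.erase i, k i s) + k i i = ∑ s, k i s :=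
      Finset.sum_erase_add _ _ (Finset.mem_univ i)
    have h2 : ∑ s, k i s = m + 1 := by rw [hrow i, hqi]
    have h4 := hdiag i
    have h3 : ∑ s ∈ Finset.univ.erase i, k i s = m + 1 := by omega
    rw [← Nat.cast_sum, h3]
    push_cast
    ring
  rw [Finset.sum_congr rfl hin, ← Finset.mul_sum]
  have hm1 : ((m : ℝ) + 1) ≠ 0 := by positivity
  field_simp



variable {n : ℕ}

lemma main_induction (n : ℕ) (N : ℕ) : ∀ (q : Fin n → ℕ), (∑ r, q r) = N →
    J (∏ r, Hr (q r)) = (∏ r, (Nat.factorial (q r) : ℝ)) * ∑ k ∈ bigA q, w k := by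
  induction N using Nat.strong_induction_on with
  | _ N ih =>
    intro q hq
    by_cases hzero : ∀ i, q i = 0
    · have h1 : (∏ r, Hr (q r)) = 1 := by
        rw [Finset.prod_congr rfl (fun r (_ : r ∈ Finset.univ) => by rw [hzero r, Hr_zero])]
        exact Finset.prod_const_one
      have h2 : bigA q = {fun _ _ => 0} := by
        ext k
        rw [mem_bigA, Finset.mem_singleton]
        constructor
        · intro hk
          funext a b
          have h3 := single_le_sum_univ (k a) b
          rw [hk.2.2 a, hzero a] at h3
          omega
        · rintro rfl
          exact ⟨fun _ => rfl, fun _ _ => rfl, fun a => by simp [hzero a]⟩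
      rw [h1, J_one, h2, Finset.sum_singleton]
      unfold w
      simp [hzero]
    · push_neg at hzero
      obtain ⟨i, hi⟩ := hzero
      obtain ⟨m, hm⟩ : ∃ m, q i = m + 1 := ⟨q i - 1, by omega⟩
      rw [J_prod_rec q i m hm, G_rec q i m hm]
      apply Finset.sum_congr rfl
      intro s hs
      have hsi : s ≠ i := (Finset.mem_erase.1 hs).1
      congr 1
      set q' := Function.update (Function.update q i m) s (q s - 1) with hq'
      have hqilesum : q i ≤ ∑ r, q r := single_le_sum_univ q i
      have hsum1 : (∑ r, Function.update q i m r) + q i = m + ∑ r, q r :=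
        sum_update_univ q i m
      have hsum2 : (∑ r, q' r) + Function.update q i m s = (q s - 1) +
          ∑ r, Function.update q i m r :=
        sum_update_univ (Function.update q i m) s (q s - 1)
      have hus : Function.update q i m s = q s := Function.update_of_ne hsi m q
      have hlt : (∑ r, q' r) < N := by
        rw [hus] at hsum2
        have hqs : q s ≤ ∑ r, Function.update q i m r :=
          hus ▸ single_le_sum_univ (Function.update q i m) s
        omega
      exact ih _ hlt q' rfl

end DiagramAux

/-- Diagram formula for a single standard Gaussian `Z`:
`E[∏_{r=1}^n H_{q_r}(Z)] = ∏ q_r! · Σ_{κ ∈ A_{q₁,…,qₙ}} ∏_{i<j} 1/k_ij!`. -/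
theorem stmt_6 (n : ℕ) (hn : 2 ≤ n) (q : Fin n → ℕ) :
    (∫ z, ∏ r, Hval (q r) z ∂(gaussianReal 0 1)) =
      (∏ r, (Nat.factorial (q r) : ℝ)) *
        ∑' κ : {k : Fin n → Fin n → ℕ // memA q k},
          ∏ p ∈ Finset.univ.filter (fun p : Fin n × Fin n => p.1 < p.2),
            (1 : ℝ) / (Nat.factorial (κ.1 p.1 p.2) : ℝ) := by
  have h0 : (fun z => ∏ r, Hval (q r) z) = fun z => (∏ r, DiagramAux.Hr (q r)).eval z := by
    funext z
    rw [Polynomial.eval_prod]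
    exact Finset.prod_congr rfl fun r _ => DiagramAux.aeval_hermite_eq (q r) z
  have h1 : (∫ z, ∏ r, Hval (q r) z ∂(gaussianReal 0 1))
      = DiagramAux.J (∏ r, DiagramAux.Hr (q r)) := by
    rw [DiagramAux.integral_gauss_eq (fun z => ∏ r, Hval (q r) z)]
    unfold DiagramAux.J
    congr 1
    funext x
    rw [congrFun h0 x]
  have h2 : (∑' κ : {k : Fin n → Fin n → ℕ // memA q k},
        ∏ p ∈ Finset.univ.filter (fun p : Fin n × Fin n => p.1 < p.2),
          (1 : ℝ) / (Nat.factorial (κ.1 p.1 p.2) : ℝ))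
      = ∑ k ∈ DiagramAux.bigA q, DiagramAux.w k :=
    DiagramAux.tsum_eq_bigA q DiagramAux.w
  rw [h1, h2, DiagramAux.main_induction n (∑ r, q r) q rfl]
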